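/- If y_1, …, y_{t−1} are real numbers with |y_τ| ≤ 2H for all τ, then the weighted least-squares estimator w := Σ_t^{−1} (Σ_{τ=1}^{t−1} η^{−τ} φ_τ y_τ) satisfies ‖w‖ ≤ 2H √( d(1 − η^{t−1}) / (λ(1−η)) ). -/

import Mathlib

open Finset Matrix

/-- The weighted regularized Gram matrix
`Σ_t = ∑_{τ=1}^{t-1} η^{-τ} φ_τ φ_τᵀ + λ η^{-(t-1)} I`. -/
noncomputable def gramMatrix (d : ℕ) (η lam : ℝ) (t : ℕ)
    (φ : ℕ → EuclideanSpace ℝ (Fin d)) : Matrix (Fin d) (Fin d) ℝ :=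
  ∑ τ ∈ Finset.Icc 1 (t - 1), η ^ (-(τ : ℤ)) • Matrix.vecMulVec (φ τ) (φ τ)
    + (lam * η ^ (-((t : ℤ) - 1))) • (1 : Matrix (Fin d) (Fin d) ℝ)

lemma vecMulVec_mulVec' {d : ℕ} (u v x : Fin d → ℝ) :
    (Matrix.vecMulVec u v) *ᵥ x = (v ⬝ᵥ x) • u := by
  ext i
  simp only [Matrix.mulVec, Matrix.vecMulVec_apply, dotProduct, Pi.smul_apply, smul_eq_mul,
    Finset.sum_mul]
  exact Finset.sum_congr rfl fun j _ => by ring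

lemma sum_mulVec' {d : ℕ} {ι : Type*} (s : Finset ι) (M : ι → Matrix (Fin d) (Fin d) ℝ)
    (x : Fin d → ℝ) : (∑ τ ∈ s, M τ) *ᵥ x = ∑ τ ∈ s, (M τ) *ᵥ x := by
  ext i
  simp only [Matrix.mulVec, dotProduct, Finset.sum_apply, Matrix.sum_apply, Finset.sum_mul]
  rw [Finset.sum_comm]

lemma dotProduct_sum' {d : ℕ} {ι : Type*} (s : Finset ι) (x : Fin d → ℝ)
    (f : ι → Fin d → ℝ) : x ⬝ᵥ (∑ τ ∈ s, f τ) = ∑ τ ∈ s, x ⬝ᵥ f τ := by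
  simp only [dotProduct, Finset.sum_apply, Finset.mul_sum]
  rw [Finset.sum_comm]

lemma quadForm (d : ℕ) (η lam : ℝ) (t : ℕ) (φ : ℕ → EuclideanSpace ℝ (Fin d))
    (x : Fin d → ℝ) :
    x ⬝ᵥ (gramMatrix d η lam t φ) *ᵥ x
      = (∑ τ ∈ Finset.Icc 1 (t - 1), η ^ (-(τ : ℤ)) * ((φ τ : Fin d → ℝ) ⬝ᵥ x) ^ 2)
        + (lam * η ^ (-((t : ℤ) - 1))) * (x ⬝ᵥ x) := by
  simp only [gramMatrix, Matrix.add_mulVec, sum_mulVec', Matrix.smul_mulVec,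
    vecMulVec_mulVec', Matrix.one_mulVec, dotProduct_add, dotProduct_sum',
    dotProduct_smul, smul_eq_mul, smul_smul]
  congr 1
  refine Finset.sum_congr rfl fun τ _ => ?_
  rw [dotProduct_comm x (φ τ)]
  ring

lemma gram_posDef (d : ℕ) (η lam : ℝ) (hη : 0 < η) (hlam : 0 < lam) (t : ℕ)
    (φ : ℕ → EuclideanSpace ℝ (Fin d)) : (gramMatrix d η lam t φ).PosDef := by
  refine Matrix.PosDef.of_dotProduct_mulVec_pos ?_ ?_
  · show (gramMatrix d η lam t φ)ᴴ = _
    ext i j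
    simp only [Matrix.conjTranspose_apply, star_trivial, gramMatrix, Matrix.add_apply,
      Matrix.sum_apply, Matrix.smul_apply, Matrix.vecMulVec_apply, Matrix.one_apply,
      smul_eq_mul]
    congr 1
    · exact Finset.sum_congr rfl fun τ _ => by ring
    · by_cases h : i = j <;> simp [h, eq_comm]
  · intro x hx
    have hq := quadForm d η lam t φ x
    rw [star_trivial, hq]
    have h1 : 0 ≤ x ⬝ᵥ x := Finset.sum_nonneg fun i _ => mul_self_nonneg _
    have h2 : x ⬝ᵥ x ≠ 0 := fun h => hx (dotProduct_self_eq_zero.mp h)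
    have h3 : 0 < x ⬝ᵥ x := lt_of_le_of_ne h1 (Ne.symm h2)
    have h4 : 0 ≤ ∑ τ ∈ Finset.Icc 1 (t - 1), η ^ (-(τ : ℤ)) * ((φ τ : Fin d → ℝ) ⬝ᵥ x) ^ 2 :=
      Finset.sum_nonneg fun τ _ => mul_nonneg (zpow_nonneg hη.le _) (sq_nonneg _)
    have h5 : 0 < lam * η ^ (-((t : ℤ) - 1)) := mul_pos hlam (zpow_pos hη _)
    nlinarith [mul_pos h5 h3]

/-- If `|y_τ| ≤ 2H` for all `τ ∈ {1, …, t−1}`, then the weighted least-squares estimator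
`w = Σ_t^{−1} (∑_{τ=1}^{t−1} η^{−τ} φ_τ y_τ)` satisfies
`‖w‖ ≤ 2H √(d(1 − η^{t−1}) / (λ(1−η)))`. -/
theorem stmt_3 (d : ℕ) (hd : 1 ≤ d) (η lam H : ℝ) (hη : η ∈ Set.Ioo (0 : ℝ) 1)
    (hlam : 0 < lam) (hH : 0 < H) (t : ℕ) (ht : 1 ≤ t)
    (φ : ℕ → EuclideanSpace ℝ (Fin d)) (y : ℕ → ℝ)
    (hy : ∀ τ ∈ Finset.Icc 1 (t - 1), |y τ| ≤ 2 * H)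
    (w : EuclideanSpace ℝ (Fin d))
    (hw : w = (gramMatrix d η lam t φ)⁻¹.mulVec
        (∑ τ ∈ Finset.Icc 1 (t - 1), (η ^ (-(τ : ℤ)) * y τ) • φ τ)) :
    ‖w‖ ≤ 2 * H * Real.sqrt (d * (1 - η ^ (t - 1)) / (lam * (1 - η))) := by
  obtain ⟨hη0, hη1⟩ := hη
  set n := t - 1 with hn
  set A := gramMatrix d η lam t φ with hA
  set b : Fin d → ℝ := ∑ τ ∈ Finset.Icc 1 n, (η ^ (-(τ : ℤ)) * y τ) • (φ τ : Fin d → ℝ)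
    with hb
  have hPD := gram_posDef d η lam hη0 hlam t φ
  have hdet : IsUnit A.det := hPD.det_pos.ne'.isUnit
  set W : Fin d → ℝ := (w : Fin d → ℝ) with hW
  have hw' : W = A⁻¹ *ᵥ b := hw
  have hAw : A *ᵥ W = b := by
    rw [hw', Matrix.mulVec_mulVec, Matrix.mul_nonsing_inv _ hdet, Matrix.one_mulVec]
  -- quadratic form identity
  set u : ℕ → ℝ := fun τ => (φ τ : Fin d → ℝ) ⬝ᵥ W with hu
  set P : ℝ := W ⬝ᵥ W with hP
  set c : ℝ := lam * η ^ (-((t : ℤ) - 1)) with hc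
  set S2 : ℝ := ∑ τ ∈ Finset.Icc 1 n, η ^ (-(τ : ℤ)) * (u τ) ^ 2 with hS2
  set G : ℝ := ∑ τ ∈ Finset.Icc 1 n, η ^ (-(τ : ℤ)) with hG
  have hmainEq : S2 + c * P = ∑ τ ∈ Finset.Icc 1 n, η ^ (-(τ : ℤ)) * y τ * u τ := by
    have h1 : W ⬝ᵥ (A *ᵥ W) = S2 + c * P := quadForm d η lam t φ W
    rw [hAw] at h1
    rw [← h1, hb, dotProduct_sum']
    refine Finset.sum_congr rfl fun τ _ => ?_
    rw [dotProduct_smul, smul_eq_mul, dotProduct_comm]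
  -- nonnegativity facts
  have hS2nn : 0 ≤ S2 :=
    Finset.sum_nonneg fun τ _ => mul_nonneg (zpow_nonneg hη0.le _) (sq_nonneg _)
  have hGnn : 0 ≤ G := Finset.sum_nonneg fun τ _ => zpow_nonneg hη0.le _
  -- Cauchy-Schwarz chain
  have hstep1 : ∑ τ ∈ Finset.Icc 1 n, η ^ (-(τ : ℤ)) * y τ * u τ
      ≤ 2 * H * ∑ τ ∈ Finset.Icc 1 n, η ^ (-(τ : ℤ)) * |u τ| := by
    rw [Finset.mul_sum]
    refine Finset.sum_le_sum fun τ hτ => ?_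
    have h2 : y τ * u τ ≤ 2 * H * |u τ| := by
      calc y τ * u τ ≤ |y τ * u τ| := le_abs_self _
        _ = |y τ| * |u τ| := abs_mul _ _
        _ ≤ 2 * H * |u τ| := mul_le_mul_of_nonneg_right (hy τ hτ) (abs_nonneg _)
    have h3 : (0:ℝ) ≤ η ^ (-(τ : ℤ)) := zpow_nonneg hη0.le _
    calc η ^ (-(τ : ℤ)) * y τ * u τ = η ^ (-(τ : ℤ)) * (y τ * u τ) := by ring
      _ ≤ η ^ (-(τ : ℤ)) * (2 * H * |u τ|) := mul_le_mul_of_nonneg_left h2 h3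
      _ = 2 * H * (η ^ (-(τ : ℤ)) * |u τ|) := by ring
  have hstep2 : ∑ τ ∈ Finset.Icc 1 n, η ^ (-(τ : ℤ)) * |u τ|
      ≤ Real.sqrt G * Real.sqrt S2 := by
    have hfg : ∀ τ ∈ Finset.Icc 1 n, η ^ (-(τ : ℤ)) * |u τ|
        = Real.sqrt (η ^ (-(τ : ℤ))) * (Real.sqrt (η ^ (-(τ : ℤ))) * |u τ|) := by
      intro τ _
      rw [← mul_assoc, Real.mul_self_sqrt (zpow_nonneg hη0.le _)]
    rw [Finset.sum_congr rfl hfg]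
    have := Real.sum_mul_le_sqrt_mul_sqrt (Finset.Icc 1 n)
      (fun τ => Real.sqrt (η ^ (-(τ : ℤ)))) (fun τ => Real.sqrt (η ^ (-(τ : ℤ))) * |u τ|)
    refine this.trans_eq ?_
    congr 1
    · congr 1
      refine Finset.sum_congr rfl fun τ _ => ?_
      exact Real.sq_sqrt (zpow_nonneg hη0.le _)
    · congr 1
      refine Finset.sum_congr rfl fun τ _ => ?_
      rw [mul_pow, Real.sq_sqrt (zpow_nonneg hη0.le _), sq_abs]
  have hkey : c * P ≤ H ^ 2 * G := by
    have h4 : S2 + c * P ≤ 2 * H * (Real.sqrt G * Real.sqrt S2) := by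
      calc S2 + c * P = _ := hmainEq
        _ ≤ 2 * H * ∑ τ ∈ Finset.Icc 1 n, η ^ (-(τ : ℤ)) * |u τ| := hstep1
        _ ≤ 2 * H * (Real.sqrt G * Real.sqrt S2) :=
          mul_le_mul_of_nonneg_left hstep2 (by linarith)
    have ha : Real.sqrt S2 ^ 2 = S2 := Real.sq_sqrt hS2nn
    have hbb : Real.sqrt G ^ 2 = G := Real.sq_sqrt hGnn
    nlinarith [sq_nonneg (Real.sqrt S2 - H * Real.sqrt G), Real.sqrt_nonneg S2,
      Real.sqrt_nonneg G]
  -- geometric series computation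
  have htn : ((t : ℤ) - 1) = (n : ℤ) := by
    rw [hn]; push_cast [Nat.cast_sub ht]; ring
  have hηne : η ≠ 0 := ne_of_gt hη0
  have hη1ne : η ≠ 1 := ne_of_lt hη1
  have hgeom : η ^ n * G = (1 - η ^ n) / (1 - η) := by
    rw [hG, Finset.mul_sum]
    have h5 : ∀ τ ∈ Finset.Icc 1 n, η ^ n * η ^ (-(τ : ℤ)) = η ^ ((n : ℤ) - τ) := by
      intro τ _
      rw [← zpow_natCast η n, ← zpow_add₀ hηne]
      ring_nf
    rw [Finset.sum_congr rfl h5, ← Finset.Ico_add_one_right_eq_Icc, Finset.sum_Ico_eq_sum_range]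
    have h6 : ∀ i ∈ Finset.range (n + 1 - 1), η ^ ((n : ℤ) - (1 + i : ℕ)) = η ^ (n - 1 - i) := by
      intro i hi
      simp only [Finset.mem_range] at hi
      rw [← zpow_natCast η (n - 1 - i)]
      congr 1
      omega
    rw [Finset.sum_congr rfl h6]
    simp only [Nat.add_sub_cancel]
    rw [Finset.sum_range_reflect (fun k => η ^ k) n, geom_sum_eq hη1ne,
      show η ^ n - 1 = -(1 - η ^ n) by ring, show η - 1 = -(1 - η) by ring, neg_div_neg_eq]
  have h1η : 0 < 1 - η := by linarith
  have hηnle : η ^ n ≤ 1 := pow_le_one₀ hη0.le hη1.le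
  set X : ℝ := (1 - η ^ n) / (lam * (1 - η)) with hX
  have hXnn : 0 ≤ X := div_nonneg (by linarith) (by positivity)
  have hcpos : 0 < c := mul_pos hlam (zpow_pos hη0 _)
  have hXeq : X = η ^ n * G / lam := by
    rw [hX, hgeom, div_div, mul_comm (1 - η) lam]
  have hcX : c * (H ^ 2 * X) = H ^ 2 * G := by
    have hηn : (η : ℝ) ^ n ≠ 0 := pow_ne_zero _ hηne
    rw [hXeq, hc, htn, _root_.zpow_neg, zpow_natCast]
    field_simp
  have hPle : P ≤ H ^ 2 * X := by
    rw [← mul_le_mul_iff_right₀ hcpos]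
    exact hkey.trans_eq hcX.symm
  have hPnn : 0 ≤ P := Finset.sum_nonneg fun i _ => mul_self_nonneg _
  have hnorm : ‖w‖ = Real.sqrt P := by
    rw [EuclideanSpace.norm_eq]
    congr 1
    rw [hP]
    simp [dotProduct, Real.norm_eq_abs, sq_abs, sq, hW]
  have hd' : (1 : ℝ) ≤ (d : ℝ) := by exact_mod_cast hd
  have hsX : Real.sqrt X ≤ Real.sqrt ((d : ℝ) * X) :=
    Real.sqrt_le_sqrt (le_mul_of_one_le_left hXnn hd')
  calc ‖w‖ = Real.sqrt P := hnorm
    _ ≤ Real.sqrt (H ^ 2 * X) := Real.sqrt_le_sqrt hPle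
    _ = H * Real.sqrt X := by
        rw [Real.sqrt_mul (sq_nonneg H), Real.sqrt_sq hH.le]
    _ ≤ 2 * H * Real.sqrt ((d : ℝ) * X) := by
        have h7 : H * Real.sqrt X ≤ H * Real.sqrt ((d : ℝ) * X) :=
          mul_le_mul_of_nonneg_left hsX hH.le
        nlinarith [Real.sqrt_nonneg ((d : ℝ) * X)]
    _ = 2 * H * Real.sqrt ((d : ℝ) * (1 - η ^ n) / (lam * (1 - η))) := by
        rw [hX, mul_div_assoc]
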